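/- There exist a strictly increasing sequence k : ℕ → ℕ and a tree T ⊆ 2^{<ω} (closed under initial segments, containing the empty sequence, with every node having an extension in T of every greater length) such that: (1) for s ∈ T, both s⌢0 ∈ T and s⌢1 ∈ T if and only if |s| = k_n for some n; (2) for every n, if s₁, …, s_{2ⁿ} lists T ∩ 2^{k_n} in lexicographic order, then for every w ⊆ {1, …, 2ⁿ} with w ≠ ∅ and w ≠ {1, …, 2ⁿ} there is m with k_n ≤ m < k_{n+1} such that for each l, the unique node of T of length m+1 extending s_l takes value 0 at position m if and only if l ∈ w; (3) there is no m such that s(m) = 0 for all s ∈ T ∩ 2^{m+1}, and no m such that s(m) = 1 for all s ∈ T ∩ 2^{m+1}. -/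
import Mathlib


/-- `T ⊆ 2^{<ω}` is a tree: it contains the empty sequence, is closed under initial
segments, and every node has an extension in `T` of every greater length. -/
def IsTree (T : Set (List Bool)) : Prop :=
  ([] ∈ T) ∧ (∀ s ∈ T, ∀ t : List Bool, t <+: s → t ∈ T) ∧
    (∀ s ∈ T, ∀ n : ℕ, s.length ≤ n → ∃ t ∈ T, t.length = n ∧ s <+: t)

/-- Condition (1): a node `s ∈ T` has both immediate successors `s⌢0, s⌢1` in `T`
exactly when `|s| = k n` for some `n`. -/
def SplitsExactlyAt (k : ℕ → ℕ) (T : Set (List Bool)) : Prop :=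
  ∀ s ∈ T, ((s ++ [false] ∈ T ∧ s ++ [true] ∈ T) ↔ ∃ n : ℕ, s.length = k n)

/-- Condition (2): for every `n` and every nonempty proper subset `W` of the level
`T ∩ 2^{k n}` there is `m` with `k n ≤ m < k (n+1)` such that the (unique) node of `T`
of length `m+1` extending a node `s` of the level takes value `0` at position `m`
exactly when `s ∈ W`.  (The subsets `W` of the level correspond, via the lexicographic
listing `s₁, …, s_{2ⁿ}` of the level, to the subsets `w ⊆ {1, …, 2ⁿ}`.) -/
def SeparatesLevels (k : ℕ → ℕ) (T : Set (List Bool)) : Prop :=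
  ∀ n : ℕ, ∀ W : Set (List Bool),
    W ⊆ {s ∈ T | s.length = k n} → W ≠ ∅ → W ≠ {s ∈ T | s.length = k n} →
      ∃ m : ℕ, k n ≤ m ∧ m < k (n + 1) ∧
        ∀ s ∈ T, s.length = k n → ∀ t ∈ T, t.length = m + 1 → s <+: t →
          (t.getD m true = false ↔ s ∈ W)

/-- Condition (3): there is no `m` such that `s (m) = 0` for all `s ∈ T ∩ 2^{m+1}`, and
no `m` such that `s (m) = 1` for all `s ∈ T ∩ 2^{m+1}`. -/
def NoConstantCoordinate (T : Set (List Bool)) : Prop :=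
  (¬ ∃ m : ℕ, ∀ t ∈ T, t.length = m + 1 → t.getD m true = false) ∧
  (¬ ∃ m : ℕ, ∀ t ∈ T, t.length = m + 1 → t.getD m false = true)

/-- `S` is a perfect subtree of `T`: a subset of `T` which is itself closed under initial
segments, contains the empty sequence, and in which every node has two incomparable
extensions. -/
def IsPerfectSubtree (T S : Set (List Bool)) : Prop :=
  S ⊆ T ∧ ([] ∈ S) ∧ (∀ s ∈ S, ∀ t : List Bool, t <+: s → t ∈ S) ∧
    ∀ s ∈ S, ∃ t₁ ∈ S, ∃ t₂ ∈ S,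
      s <+: t₁ ∧ s <+: t₂ ∧ ¬ t₁ <+: t₂ ∧ ¬ t₂ <+: t₁

/-- `A⁰_S = {m : s(m) = 0 for all s ∈ S ∩ 2^{m+1}}`. -/
def A0 (S : Set (List Bool)) : Set ℕ :=
  {m | ∀ t ∈ S, t.length = m + 1 → t.getD m true = false}

/-- `A¹_S = {m : s(m) = 1 for all s ∈ S ∩ 2^{m+1}}`. -/
def A1 (S : Set (List Bool)) : Set ℕ :=
  {m | ∀ t ∈ S, t.length = m + 1 → t.getD m false = true}



namespace SepTree

/-- The splitting levels. -/
def k : ℕ → ℕ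
  | 0 => 0
  | n + 1 => k n + 2 ^ 2 ^ n + 1

lemma k_zero : k 0 = 0 := rfl
lemma k_succ (n : ℕ) : k (n + 1) = k n + 2 ^ 2 ^ n + 1 := rfl

lemma k_strictMono : StrictMono k := by
  apply strictMono_nat_of_lt_succ
  intro n
  have := Nat.two_pow_pos (2 ^ n)
  rw [k_succ]; omega

lemma k_mono : Monotone k := k_strictMono.monotone

lemma k_self_le (n : ℕ) : n ≤ k n := by
  induction n with
  | zero => simp [k_zero]
  | succ n ih => have := Nat.two_pow_pos (2 ^ n); rw [k_succ]; omega

/-- Index of the last splitting level `≤ m`. -/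
def nIdx (m : ℕ) : ℕ := Nat.findGreatest (fun n => k n ≤ m) m

lemma k_nIdx_le (m : ℕ) : k (nIdx m) ≤ m :=
  Nat.findGreatest_spec (P := fun n => k n ≤ m) (Nat.zero_le m)
    (show k 0 ≤ m by rw [k_zero]; exact Nat.zero_le m)

lemma lt_k_nIdx_succ (m : ℕ) : m < k (nIdx m + 1) := by
  by_contra h
  push_neg at h
  exact Nat.findGreatest_is_greatest (Nat.lt_succ_self _)
    (le_trans (k_self_le (nIdx m + 1)) h) h

lemma nIdx_eq {n m : ℕ} (h1 : k n ≤ m) (h2 : m < k (n + 1)) : nIdx m = n := by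
  have hub : nIdx m < n + 1 := by
    by_contra h
    push_neg at h
    exact absurd (le_trans (k_mono h) (k_nIdx_le m)) (by omega)
  have hlb : n ≤ nIdx m := Nat.le_findGreatest (le_trans (k_self_le n) h1) h1
  omega

lemma nIdx_k (n : ℕ) : nIdx (k n) = n :=
  nIdx_eq le_rfl (k_strictMono (Nat.lt_succ_self n))

/-- Encode the first `N` values of `g` as a natural number `< 2 ^ N`. -/
def enc : ℕ → (ℕ → Bool) → ℕ
  | 0, _ => 0
  | N + 1, g => 2 * enc N (fun i => g (i + 1)) + (if g 0 then 1 else 0)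

lemma enc_lt (N : ℕ) (g : ℕ → Bool) : enc N g < 2 ^ N := by
  induction N generalizing g with
  | zero => simp [enc]
  | succ N ih =>
    have h := ih (fun i => g (i + 1))
    show 2 * enc N (fun i => g (i + 1)) + (if g 0 then 1 else 0) < 2 ^ (N + 1)
    rw [pow_succ]
    split <;> omega

lemma testBit_enc (N : ℕ) (g : ℕ → Bool) (i : ℕ) :
    (enc N g).testBit i = if i < N then g i else false := by
  induction N generalizing g i with
  | zero => simp [enc]
  | succ N ih =>
    rcases i with _ | i
    · have hm : (enc (N + 1) g) % 2 = (if g 0 then 1 else 0) := by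
        show (2 * enc N (fun i => g (i + 1)) + (if g 0 then 1 else 0)) % 2 = _
        split <;> omega
      rw [Nat.testBit_zero, hm]
      cases hg : g 0 <;> simp
    · rw [Nat.testBit_succ]
      have hd : enc (N + 1) g / 2 = enc N (fun i => g (i + 1)) := by
        show (2 * enc N (fun i => g (i + 1)) + (if g 0 then 1 else 0)) / 2 = _
        split <;> omega
      rw [hd, ih]
      simp only [Nat.add_lt_add_iff_right]

lemma enc_congr : ∀ (N : ℕ) {g g' : ℕ → Bool}, (∀ i < N, g i = g' i) → enc N g = enc N g'
  | 0, _, _, _ => rfl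
  | N + 1, g, g', h => by
    show 2 * enc N (fun i => g (i + 1)) + (if g 0 then 1 else 0)
        = 2 * enc N (fun i => g' (i + 1)) + (if g' 0 then 1 else 0)
    rw [enc_congr N (fun i hi => h (i + 1) (by omega)), h 0 (by omega)]

lemma enc_testBit_self {N u : ℕ} (hu : u < 2 ^ N) :
    enc N (fun i => u.testBit i) = u := by
  apply Nat.eq_of_testBit_eq
  intro i
  rw [testBit_enc]
  split
  · rfl
  · rename_i h
    exact (Nat.testBit_lt_two_pow
      (lt_of_lt_of_le hu (Nat.pow_le_pow_right (by norm_num) (by omega)))).symm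

/-- The branch through the tree determined by the "free bits" `α`. -/
def B (α : ℕ → Bool) (m : ℕ) : Bool :=
  if m = k (nIdx m) then α (nIdx m)
  else if ∀ u < 2 ^ nIdx m, (m - k (nIdx m) - 1).testBit u = (m - k (nIdx m) - 1).testBit 0
    then α (nIdx m)
  else !(m - k (nIdx m) - 1).testBit (enc (nIdx m) α)

lemma B_free (α : ℕ → Bool) (n : ℕ) : B α (k n) = α n := by
  unfold B
  rw [nIdx_k, if_pos rfl]

lemma B_congr {m : ℕ} {α α' : ℕ → Bool} (h : ∀ i ≤ nIdx m, α i = α' i) :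
    B α m = B α' m := by
  unfold B
  rw [enc_congr (nIdx m) (fun i hi => h i (le_of_lt hi)), h (nIdx m) le_rfl]

lemma B_gap_nonconst {m n : ℕ} (hn : nIdx m = n) (hm : m ≠ k n)
    (hc : ¬ ∀ u < 2 ^ n, (m - k n - 1).testBit u = (m - k n - 1).testBit 0)
    (α : ℕ → Bool) :
    B α m = !(m - k n - 1).testBit (enc n α) := by
  unfold B
  rw [hn, if_neg hm, if_neg hc]

lemma B_gap_const {m n : ℕ} (hn : nIdx m = n) (hm : m ≠ k n)
    (hc : ∀ u < 2 ^ n, (m - k n - 1).testBit u = (m - k n - 1).testBit 0)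
    (α : ℕ → Bool) :
    B α m = α n := by
  unfold B
  rw [hn, if_neg hm, if_pos hc]

/-- The node of length `L` on the branch `α`. -/
def node (α : ℕ → Bool) (L : ℕ) : List Bool := (List.range L).map (B α)

lemma length_node (α : ℕ → Bool) (L : ℕ) : (node α L).length = L := by
  simp [node]

lemma getD_node {m L : ℕ} (h : m < L) (α : ℕ → Bool) (d : Bool) :
    (node α L).getD m d = B α m := by
  rw [List.getD_eq_getElem _ _ (by simpa [node] using h)]
  simp [node]

lemma take_node {m L : ℕ} (h : m ≤ L) (α : ℕ → Bool) :
    (node α L).take m = node α m := by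
  unfold node
  rw [← List.map_take, List.take_range, Nat.min_eq_left h]

lemma node_prefix {m L : ℕ} (h : m ≤ L) (α : ℕ → Bool) :
    node α m <+: node α L := by
  rw [← take_node h]
  exact List.take_prefix _ _

lemma node_succ (α : ℕ → Bool) (L : ℕ) :
    node α (L + 1) = node α L ++ [B α L] := by
  unfold node
  rw [List.range_succ, List.map_append]
  rfl

lemma node_congr {n L : ℕ} {α α' : ℕ → Bool} (h : ∀ i < n, α i = α' i)
    (hL : L ≤ k n) : node α L = node α' L := by
  unfold node
  apply List.map_congr_left
  intro m hm
  rw [List.mem_range] at hm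
  have hmn : nIdx m < n := by
    have h1 : k (nIdx m) ≤ m := k_nIdx_le m
    have h2 : m < k n := lt_of_lt_of_le hm hL
    exact k_strictMono.lt_iff_lt.mp (lt_of_le_of_lt h1 h2)
  exact B_congr fun i hi => h i (lt_of_le_of_lt hi hmn)

/-- The tree. -/
def Tr : Set (List Bool) := {s | ∃ α : ℕ → Bool, s = node α s.length}

lemma node_mem (α : ℕ → Bool) (L : ℕ) : node α L ∈ Tr :=
  ⟨α, by rw [length_node]⟩

lemma getD_concat {β : Type*} (l : List β) (a d : β) : (l ++ [a]).getD l.length d = a := by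
  rw [List.getD_eq_getElem _ _ (by simp)]
  simp

end SepTree

namespace SepTree

lemma exists_B (m : ℕ) (b : Bool) : ∃ α : ℕ → Bool, B α m = b := by
  by_cases hfree : m = k (nIdx m)
  · exact ⟨fun _ => b, by rw [hfree, B_free]⟩
  · by_cases hc : ∀ u < 2 ^ nIdx m,
        (m - k (nIdx m) - 1).testBit u = (m - k (nIdx m) - 1).testBit 0
    · exact ⟨fun _ => b, B_gap_const rfl hfree hc _⟩
    · push_neg at hc
      obtain ⟨u, hu, hne⟩ := hc
      by_cases h0 : (m - k (nIdx m) - 1).testBit 0 = !b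
      · refine ⟨fun i => (0 : ℕ).testBit i, ?_⟩
        rw [B_gap_nonconst rfl hfree (by push_neg; exact ⟨u, hu, hne⟩) _,
          enc_testBit_self (Nat.two_pow_pos _), h0]
        simp
      · have hu' : (m - k (nIdx m) - 1).testBit u = !b := by
          revert hne h0
          cases (m - k (nIdx m) - 1).testBit u <;>
            cases (m - k (nIdx m) - 1).testBit 0 <;> cases b <;> simp
        refine ⟨fun i => u.testBit i, ?_⟩
        rw [B_gap_nonconst rfl hfree (by push_neg; exact ⟨u, hu, hne⟩) _,
          enc_testBit_self hu, hu']
        simp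

lemma isTree : ([] ∈ Tr) ∧ (∀ s ∈ Tr, ∀ t : List Bool, t <+: s → t ∈ Tr) ∧
    (∀ s ∈ Tr, ∀ n : ℕ, s.length ≤ n → ∃ t ∈ Tr, t.length = n ∧ s <+: t) := by
  refine ⟨⟨fun _ => false, by simp [node]⟩, ?_, ?_⟩
  · intro s hs t hts
    obtain ⟨α, hsα⟩ := hs
    have h1 : t = s.take t.length := List.prefix_iff_eq_take.mp hts
    have h2 : s.take t.length = node α t.length := by
      rw [hsα, take_node hts.length_le]
    exact ⟨α, h1.trans h2⟩
  · intro s hs n hn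
    obtain ⟨α, hsα⟩ := hs
    refine ⟨node α n, node_mem α n, length_node α n, ?_⟩
    rw [hsα]
    exact node_prefix hn α

lemma splits : ∀ s ∈ Tr,
    ((s ++ [false] ∈ Tr ∧ s ++ [true] ∈ Tr) ↔ ∃ n : ℕ, s.length = k n) := by
  intro s hs
  obtain ⟨α, hsα⟩ := hs
  constructor
  · rintro ⟨h0, h1⟩
    by_contra hne
    push_neg at hne
    set n := nIdx s.length with hn
    have hkn : k n < s.length := lt_of_le_of_ne (k_nIdx_le _) (fun h => hne n h.symm)
    obtain ⟨α₀, h₀⟩ := h0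
    obtain ⟨α₁, h₁⟩ := h1
    have h₀' : s ++ [false] = node α₀ (s.length + 1) := by simpa using h₀
    have h₁' : s ++ [true] = node α₁ (s.length + 1) := by simpa using h₁
    have key : ∀ (b : Bool) (β : ℕ → Bool), s ++ [b] = node β (s.length + 1) →
        ∀ i ≤ n, β i = s.getD (k i) true := by
      intro b β hβ i hi
      have hki : k i < s.length := lt_of_le_of_lt (k_mono hi) hkn
      have h2 : B β (k i) = (node β (s.length + 1)).getD (k i) true :=
        (getD_node (by omega) _ _).symm
      rw [← B_free β i, h2, ← hβ, List.getD_append _ _ _ _ hki]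
    have hagree : ∀ i ≤ nIdx s.length, α₀ i = α₁ i := fun i hi =>
      (key false α₀ h₀' i hi).trans (key true α₁ h₁' i hi).symm
    have hB : B α₀ s.length = B α₁ s.length := B_congr hagree
    have hb0 : B α₀ s.length = false := by
      have hg := getD_node (Nat.lt_succ_self s.length) α₀ true
      rw [← h₀'] at hg
      rw [← hg, getD_concat]
    have hb1 : B α₁ s.length = true := by
      have hg := getD_node (Nat.lt_succ_self s.length) α₁ true
      rw [← h₁'] at hg
      rw [← hg, getD_concat]
    rw [hb0, hb1] at hB
    exact absurd hB (by simp)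
  · rintro ⟨m, hm⟩
    have hbuild : ∀ b : Bool, s ++ [b] ∈ Tr := by
      intro b
      refine ⟨Function.update α m b, ?_⟩
      have hlen : (s ++ [b]).length = s.length + 1 := by simp
      rw [hlen, node_succ]
      have e1 : node (Function.update α m b) s.length = s := by
        conv_rhs => rw [hsα]
        apply (node_congr (n := m) ?_ (le_of_eq hm)).symm
        intro i hi
        exact (Function.update_of_ne (ne_of_lt hi) b α).symm
      have e2 : B (Function.update α m b) s.length = b := by
        rw [hm, B_free, Function.update_self]
      rw [e1, e2]
    exact ⟨hbuild false, hbuild true⟩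

end SepTree

namespace SepTree

lemma separates : ∀ n : ℕ, ∀ W : Set (List Bool),
    W ⊆ {s ∈ Tr | s.length = k n} → W ≠ ∅ → W ≠ {s ∈ Tr | s.length = k n} →
      ∃ m : ℕ, k n ≤ m ∧ m < k (n + 1) ∧
        ∀ s ∈ Tr, s.length = k n → ∀ t ∈ Tr, t.length = m + 1 → s <+: t →
          (t.getD m true = false ↔ s ∈ W) := by
  intro n W hWsub hWne hWproper
  classical
  set j : ℕ :=
    enc (2 ^ n) (fun u => if node (fun i => u.testBit i) (k n) ∈ W then true else false)
    with hjdef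
  have hjlt : j < 2 ^ 2 ^ n := enc_lt _ _
  set m : ℕ := k n + 1 + j with hmdef
  have hmlt : m < k (n + 1) := by rw [k_succ]; omega
  have hnm : nIdx m = n := nIdx_eq (by omega) hmlt
  have hjm : m - k n - 1 = j := by omega
  have hbit : ∀ α : ℕ → Bool,
      j.testBit (enc n α) = (if node α (k n) ∈ W then true else false) := by
    intro α
    have h1 : enc n α < 2 ^ n := enc_lt _ _
    rw [hjdef, testBit_enc, if_pos h1]
    have h2 : node (fun i => (enc n α).testBit i) (k n) = node α (k n) := by
      apply node_congr ?_ le_rfl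
      intro i hi
      rw [testBit_enc, if_pos hi]
    rw [h2]
  -- nonempty: a bit that is true
  obtain ⟨s0, hs0W⟩ := Set.nonempty_iff_ne_empty.mpr hWne
  obtain ⟨hs0T, hs0len⟩ := hWsub hs0W
  obtain ⟨α0, hα0⟩ := hs0T
  rw [hs0len] at hα0
  have hbit0 : j.testBit (enc n α0) = true := by
    rw [hbit, ← hα0, if_pos hs0W]
  -- proper: a bit that is false
  have hex : ∃ s1, (s1 ∈ Tr ∧ s1.length = k n) ∧ s1 ∉ W := by
    by_contra h
    push_neg at h
    exact hWproper (Set.Subset.antisymm hWsub (fun s hs => h s ⟨hs.1, hs.2⟩))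
  obtain ⟨s1, ⟨hs1T, hs1len⟩, hs1W⟩ := hex
  obtain ⟨α1, hα1⟩ := hs1T
  rw [hs1len] at hα1
  have hbit1 : j.testBit (enc n α1) = false := by
    rw [hbit, ← hα1, if_neg hs1W]
  have hNC : ¬ ∀ u < 2 ^ n, (m - k n - 1).testBit u = (m - k n - 1).testBit 0 := by
    rw [hjm]
    intro hconst
    have e0 := hconst (enc n α0) (enc_lt _ _)
    have e1 := hconst (enc n α1) (enc_lt _ _)
    rw [hbit0] at e0
    rw [hbit1] at e1
    rw [← e0] at e1
    exact Bool.noConfusion e1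
  refine ⟨m, by omega, hmlt, ?_⟩
  intro s hsT hslen t htT htlen hpre
  obtain ⟨α, hαt⟩ := htT
  rw [htlen] at hαt
  have hgd : t.getD m true = B α m := by
    rw [hαt]; exact getD_node (Nat.lt_succ_self m) α true
  have hBm : B α m = !(m - k n - 1).testBit (enc n α) :=
    B_gap_nonconst hnm (by omega) hNC α
  have hst : s = node α (k n) := by
    have h1 : s = t.take s.length := List.prefix_iff_eq_take.mp hpre
    rw [h1, hslen, hαt, take_node (by omega)]
  rw [hgd, hBm, hjm, hbit α, ← hst]
  by_cases hsW : s ∈ W <;> simp [hsW]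

lemma noConst :
    (¬ ∃ m : ℕ, ∀ t ∈ Tr, t.length = m + 1 → t.getD m true = false) ∧
    (¬ ∃ m : ℕ, ∀ t ∈ Tr, t.length = m + 1 → t.getD m false = true) := by
  constructor
  · rintro ⟨m, h⟩
    obtain ⟨α, hα⟩ := exists_B m true
    have ht := h (node α (m + 1)) (node_mem α (m + 1)) (length_node α (m + 1))
    rw [getD_node (Nat.lt_succ_self m), hα] at ht
    exact Bool.noConfusion ht
  · rintro ⟨m, h⟩
    obtain ⟨α, hα⟩ := exists_B m false
    have ht := h (node α (m + 1)) (node_mem α (m + 1)) (length_node α (m + 1))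
    rw [getD_node (Nat.lt_succ_self m), hα] at ht
    exact Bool.noConfusion ht

end SepTree


/-- There exist a strictly increasing sequence `k` and a tree `T ⊆ 2^{<ω}` satisfying
conditions (1), (2) and (3). -/
theorem exists_separating_tree :
    ∃ k : ℕ → ℕ, StrictMono k ∧ ∃ T : Set (List Bool), IsTree T ∧
      SplitsExactlyAt k T ∧ SeparatesLevels k T ∧ NoConstantCoordinate T :=
  ⟨SepTree.k, SepTree.k_strictMono, SepTree.Tr, SepTree.isTree, SepTree.splits,
    SepTree.separates, SepTree.noConst⟩
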